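/- Every isometric action of a group G on a geodesic metric space S is equivalent to an action of G on a connected graph Γ (with the combinatorial path metric) such that G acts freely on the vertex set of Γ. Concretely, let Γ have vertex set G × S with an edge between (g₁,s₁) and (g₂,s₂) whenever d_S(s₁,s₂) ≤ 1; then the diagonal-type G-action on Γ is free on vertices and the map s ↦ (1,s) is a coarsely G-equivariant quasi-isometry S → Γ. -/

import Mathlib

/-- Every isometric action of a group `G` on a nonempty geodesic metric space `S` is
equivalent to an action of `G` on a connected graph (with the combinatorial metric) by
graph automorphisms that is free on the vertex set: there is a coarsely `G`-equivariant
quasi-isometry from `S` to the vertex set with the graph metric. -/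
theorem action_equivalent_to_free_graph_action {G : Type} [Group G] {S : Type}
    [MetricSpace S] [Nonempty S] [MulAction G S]
    (hisom : ∀ (g : G) (x y : S), dist (g • x) (g • y) = dist x y)
    (hgeo : ∀ x y : S, ∃ γ : ℝ → S, γ 0 = x ∧ γ (dist x y) = y ∧
      ∀ s t : ℝ, s ∈ Set.Icc 0 (dist x y) → t ∈ Set.Icc 0 (dist x y) →
        dist (γ s) (γ t) = |s - t|) :
    ∃ (V : Type) (Γ : SimpleGraph V) (σ : G → V → V),
      Γ.Connected ∧
      (∀ v, σ 1 v = v) ∧ (∀ g g' v, σ (g * g') v = σ g (σ g' v)) ∧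
      (∀ (g : G) (u v : V), Γ.Adj u v ↔ Γ.Adj (σ g u) (σ g v)) ∧
      (∀ (g : G) (v : V), σ g v = v → g = 1) ∧
      ∃ f : S → V,
        (∀ x : S, ∃ D : ℝ, ∀ g : G, (Γ.dist (f (g • x)) (σ g (f x)) : ℝ) ≤ D) ∧
        (∃ C : ℝ, 1 ≤ C ∧ ∀ x y : S,
          (1 / C) * dist x y - C ≤ (Γ.dist (f x) (f y) : ℝ) ∧
          (Γ.dist (f x) (f y) : ℝ) ≤ C * dist x y + C) ∧
        (∃ ε : ℝ, ∀ v : V, ∃ x : S, (Γ.dist (f x) v : ℝ) ≤ ε) := by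
  classical
  let Γ : SimpleGraph (G × S) :=
    { Adj := fun u v => u ≠ v ∧ dist u.2 v.2 ≤ 1
      symm := ⟨fun u v h => ⟨h.1.symm, dist_comm v.2 u.2 ▸ h.2⟩⟩
      loopless := ⟨fun v h => h.1 rfl⟩ }
  let σ : G → (G × S) → (G × S) := fun g v => (g * v.1, g • v.2)
  -- lower bound along any walk
  have walkLB : ∀ (u v : G × S) (p : Γ.Walk u v), dist u.2 v.2 ≤ (p.length : ℝ) := by
    intro u v p
    induction p with
    | nil => simp
    | @cons a b c h p ih =>
      have := dist_triangle a.2 b.2 c.2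
      have h1 : dist a.2 b.2 ≤ 1 := h.2
      rw [SimpleGraph.Walk.length_cons]
      push_cast
      linarith
  -- short walks along geodesics
  have key : ∀ (n : ℕ) (g : G) (x y : S), dist x y ≤ (n : ℝ) →
      ∃ p : Γ.Walk (g, x) (g, y), p.length ≤ n := by
    intro n
    induction n with
    | zero =>
      intro g x y hd
      have : x = y := by
        have : dist x y = 0 := le_antisymm (by simpa using hd) dist_nonneg
        exact dist_eq_zero.mp this
      subst this
      exact ⟨SimpleGraph.Walk.nil, by simp⟩
    | succ n ih =>
      intro g x y hd
      obtain ⟨γ, hγ0, hγd, hiso⟩ := hgeo x y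
      have hd0 : 0 ≤ dist x y := dist_nonneg
      have ht0 : 0 ≤ min (dist x y) (n : ℝ) := le_min hd0 (Nat.cast_nonneg n)
      have htd : min (dist x y) (n : ℝ) ≤ dist x y := min_le_left _ _
      have hxz : dist x (γ (min (dist x y) (n : ℝ))) = min (dist x y) (n : ℝ) := by
        have h2 := hiso 0 (min (dist x y) (n : ℝ)) ⟨le_refl 0, hd0⟩ ⟨ht0, htd⟩
        rw [hγ0] at h2
        rw [h2, abs_of_nonpos (by linarith)]
        ring
      have hzy : dist (γ (min (dist x y) (n : ℝ))) y ≤ 1 := by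
        have h2 := hiso (min (dist x y) (n : ℝ)) (dist x y) ⟨ht0, htd⟩ ⟨hd0, le_refl _⟩
        rw [hγd] at h2
        rw [h2, abs_of_nonpos (by linarith)]
        have h1 : dist x y - 1 ≤ (n : ℝ) := by push_cast at hd; linarith
        have h3 : dist x y - 1 ≤ min (dist x y) (n : ℝ) := le_min (by linarith) h1
        linarith
      obtain ⟨p, hp⟩ := ih g x (γ (min (dist x y) (n : ℝ)))
        (by rw [hxz]; exact min_le_right _ _)
      by_cases hzy' : γ (min (dist x y) (n : ℝ)) = y
      · refine ⟨p.copy rfl (by rw [hzy']), ?_⟩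
        rw [SimpleGraph.Walk.length_copy]
        omega
      · have hadj : Γ.Adj (g, γ (min (dist x y) (n : ℝ))) (g, y) := by
          refine ⟨?_, hzy⟩
          simp only [ne_eq, Prod.mk.injEq]
          tauto
        refine ⟨p.concat hadj, ?_⟩
        rw [SimpleGraph.Walk.length_concat]
        omega
  have reach : ∀ (u v : G × S), Γ.Reachable u v := by
    rintro ⟨g, x⟩ ⟨h, y⟩
    have r1 : Γ.Reachable (g, x) (h, x) := by
      by_cases hg : g = h
      · subst hg; exact SimpleGraph.Reachable.refl _
      · exact SimpleGraph.Adj.reachable ⟨by simp [hg], by simp⟩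
    have r2 : Γ.Reachable (h, x) (h, y) := by
      obtain ⟨p, _⟩ := key ⌈dist x y⌉₊ h x y (Nat.le_ceil _)
      exact ⟨p⟩
    exact r1.trans r2
  have hconn : Γ.Connected := by
    rw [SimpleGraph.connected_iff]
    exact ⟨fun u v => reach u v, ⟨(1, Classical.arbitrary S)⟩⟩
  refine ⟨G × S, Γ, σ, hconn, ?_, ?_, ?_, ?_, ?_⟩
  · intro v; simp [σ]
  · intro g g' v; simp [σ, mul_assoc, mul_smul]
  · -- adjacency invariance
    have inj : ∀ (g : G) (u v : G × S), σ g u = σ g v → u = v := by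
      intro g u v huv
      simp only [σ, Prod.mk.injEq] at huv
      obtain ⟨h1, h2⟩ := huv
      exact Prod.ext (mul_left_cancel h1) (MulAction.injective g h2)
    have fwd : ∀ (g : G) (u v : G × S), Γ.Adj u v → Γ.Adj (σ g u) (σ g v) := by
      intro g u v ⟨hne, hd⟩
      refine ⟨fun hcon => hne (inj g u v hcon), ?_⟩
      simpa [σ, hisom] using hd
    intro g u v
    constructor
    · exact fwd g u v
    · intro h
      have := fwd g⁻¹ _ _ h
      have heq : ∀ w : G × S, σ g⁻¹ (σ g w) = w := by
        intro w; simp [σ, inv_mul_cancel_left]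
      rwa [heq, heq] at this
  · -- freeness
    intro g v hgv
    have h1 := congrArg Prod.fst hgv
    simp only [σ] at h1
    exact mul_eq_right.mp h1
  · -- quasi-isometry
    refine ⟨fun s => (1, s), ?_, ?_, ?_⟩
    · -- coarse equivariance
      intro x
      refine ⟨1, fun g => ?_⟩
      show ((Γ.dist (1, g • x) (σ g (1, x)) : ℕ) : ℝ) ≤ 1
      by_cases hg : (1 : G) = g * 1
      · have heq : ((1 : G), g • x) = σ g ((1 : G), x) := by simp [σ, ← hg]
        rw [heq, SimpleGraph.dist_self]
        norm_num
      · have hadj : Γ.Adj (1, g • x) (σ g (1, x)) := by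
          refine ⟨?_, by simp [σ]⟩
          simp only [σ, ne_eq, Prod.mk.injEq]
          tauto
        have := SimpleGraph.dist_le (SimpleGraph.Walk.cons hadj SimpleGraph.Walk.nil)
        simp only [SimpleGraph.Walk.length_cons, SimpleGraph.Walk.length_nil] at this
        exact_mod_cast this
    · -- QI bounds
      refine ⟨1, le_refl 1, fun x y => ?_⟩
      constructor
      · obtain ⟨p, hp⟩ := (reach (1, x) (1, y)).exists_walk_length_eq_dist
        have := walkLB _ _ p
        rw [hp] at this
        simp only at this
        linarith
      · obtain ⟨p, hp⟩ := key ⌈dist x y⌉₊ 1 x y (Nat.le_ceil _)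
        have h1 : Γ.dist (1, x) (1, y) ≤ p.length := SimpleGraph.dist_le p
        have h2 : (⌈dist x y⌉₊ : ℝ) < dist x y + 1 := Nat.ceil_lt_add_one dist_nonneg
        have h3 : (Γ.dist (1, x) (1, y) : ℝ) ≤ (⌈dist x y⌉₊ : ℝ) := by
          exact_mod_cast le_trans h1 hp
        linarith
    · -- density
      refine ⟨1, ?_⟩
      rintro ⟨g, s⟩
      refine ⟨s, ?_⟩
      show ((Γ.dist (1, s) (g, s) : ℕ) : ℝ) ≤ 1
      by_cases hg : ((1 : G), s) = (g, s)
      · rw [hg, SimpleGraph.dist_self]; norm_num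
      · have hadj : Γ.Adj (1, s) (g, s) := ⟨hg, by simp⟩
        have := SimpleGraph.dist_le (SimpleGraph.Walk.cons hadj SimpleGraph.Walk.nil)
        simp only [SimpleGraph.Walk.length_cons, SimpleGraph.Walk.length_nil] at this
        exact_mod_cast this
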